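/- Suppose γ ∈ SL(3,ℝ) admits a Bruhat factorization γ = u₂ · d · z · w · u₁ where u₁, u₂ ∈ N, d ∈ A, z ∈ M₀, and w ∈ SL(3,ℝ) is a signed permutation matrix (each row and each column of w has exactly one nonzero entry, equal to 1 or −1). Then u₂ A u₂⁻¹ ⊆ P₀ and u₂ A u₂⁻¹ ⊆ γ P₀ γ⁻¹; that is, u₂ A u₂⁻¹ is a common split component of the minimal parabolic subgroups P₀ and γ P₀ γ⁻¹. -/

import Mathlib

/-- `G = SL(3,ℝ)`. -/
abbrev SL3 := Matrix.SpecialLinearGroup (Fin 3) ℝ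

/-- A matrix is upper triangular (membership in the standard minimal parabolic `P₀`). -/
def IsUpperTri (M : Matrix (Fin 3) (Fin 3) ℝ) : Prop := ∀ i j : Fin 3, j < i → M i j = 0

/-- A matrix is upper triangular unipotent (membership in `N`). -/
def IsUnipUpperTri (M : Matrix (Fin 3) (Fin 3) ℝ) : Prop :=
  IsUpperTri M ∧ ∀ i : Fin 3, M i i = 1

/-- A matrix is diagonal with positive diagonal entries (membership in `A`). -/
def IsPosDiag (M : Matrix (Fin 3) (Fin 3) ℝ) : Prop :=
  (∀ i j : Fin 3, i ≠ j → M i j = 0) ∧ ∀ i : Fin 3, 0 < M i i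

/-- A matrix is diagonal with diagonal entries `±1` (membership in `M₀`). -/
def IsSignDiag (M : Matrix (Fin 3) (Fin 3) ℝ) : Prop :=
  (∀ i j : Fin 3, i ≠ j → M i j = 0) ∧ ∀ i : Fin 3, M i i = 1 ∨ M i i = -1

/-- A signed permutation matrix: each row and each column has exactly one nonzero entry,
and that entry is `1` or `-1`. -/
def IsSignedPerm (M : Matrix (Fin 3) (Fin 3) ℝ) : Prop :=
  (∀ i : Fin 3, ∃! j : Fin 3, M i j ≠ 0) ∧
  (∀ j : Fin 3, ∃! i : Fin 3, M i j ≠ 0) ∧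
  (∀ i j : Fin 3, M i j = 0 ∨ M i j = 1 ∨ M i j = -1)

lemma mul_upperTri {M N : Matrix (Fin 3) (Fin 3) ℝ} (hM : IsUpperTri M) (hN : IsUpperTri N) :
    IsUpperTri (M * N) := by
  intro i j hji
  rw [Matrix.mul_apply]
  apply Finset.sum_eq_zero
  intro k _
  rcases lt_or_ge k i with h | h
  · rw [hM i k h, zero_mul]
  · rw [hN k j (lt_of_lt_of_le hji h), mul_zero]

lemma coe_inv_eq {u : SL3} {v : Matrix (Fin 3) (Fin 3) ℝ}
    (h : (u : Matrix (Fin 3) (Fin 3) ℝ) * v = 1) :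
    ((u⁻¹ : SL3) : Matrix (Fin 3) (Fin 3) ℝ) = v := by
  have h2 : ((u⁻¹ : SL3) : Matrix (Fin 3) (Fin 3) ℝ) * (u : Matrix (Fin 3) (Fin 3) ℝ) = 1 := by
    rw [← Matrix.SpecialLinearGroup.coe_mul, inv_mul_cancel]
    simp
  calc ((u⁻¹ : SL3) : Matrix (Fin 3) (Fin 3) ℝ)
      = ((u⁻¹ : SL3) : Matrix (Fin 3) (Fin 3) ℝ) * ((u : Matrix (Fin 3) (Fin 3) ℝ) * v) := by rw [h, Matrix.mul_one]
    _ = (((u⁻¹ : SL3) : Matrix (Fin 3) (Fin 3) ℝ) * (u : Matrix (Fin 3) (Fin 3) ℝ)) * v := by rw [Matrix.mul_assoc]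
    _ = v := by rw [h2, Matrix.one_mul]

lemma inv_unip (u : SL3) (h : IsUnipUpperTri (u : Matrix (Fin 3) (Fin 3) ℝ)) :
    IsUnipUpperTri ((u⁻¹ : SL3) : Matrix (Fin 3) (Fin 3) ℝ) := by
  obtain ⟨ht, hdg⟩ := h
  set U : Matrix (Fin 3) (Fin 3) ℝ := ↑u with hU
  have h10 : U 1 0 = 0 := ht 1 0 (by decide)
  have h20 : U 2 0 = 0 := ht 2 0 (by decide)
  have h21 : U 2 1 = 0 := ht 2 1 (by decide)
  set b := U 0 1
  set cc := U 0 2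
  set e := U 1 2
  have huv : U * !![1, -b, b*e - cc; 0, 1, -e; 0, 0, 1] = 1 := by
    ext i j
    fin_cases i <;> fin_cases j <;>
      simp [Matrix.mul_apply, Fin.sum_univ_three, h10, h20, h21, hdg 0, hdg 1, hdg 2,
        Matrix.one_apply, Matrix.vecHead, Matrix.vecTail] <;> ring_nf <;> simp only [b, cc, e] <;> ring
  rw [coe_inv_eq huv]
  refine ⟨?_, ?_⟩
  · intro i j hji
    fin_cases i <;> fin_cases j <;> first
      | exact absurd hji (by decide)
      | simp [Matrix.vecHead, Matrix.vecTail]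
  · intro i; fin_cases i <;> simp [Matrix.vecHead, Matrix.vecTail]


lemma diag_eq {M : Matrix (Fin 3) (Fin 3) ℝ} (h : ∀ i j : Fin 3, i ≠ j → M i j = 0) :
    M = Matrix.diagonal (fun i => M i i) := by
  ext i j
  by_cases hij : i = j
  · subst hij; simp
  · rw [h i j hij, Matrix.diagonal_apply_ne _ hij]

lemma diag_comm (x y : SL3) (hx : ∀ i j : Fin 3, i ≠ j → (x : Matrix (Fin 3) (Fin 3) ℝ) i j = 0)
    (hy : ∀ i j : Fin 3, i ≠ j → (y : Matrix (Fin 3) (Fin 3) ℝ) i j = 0) : x * y = y * x := by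
  have hmat : (x : Matrix (Fin 3) (Fin 3) ℝ) * (y : Matrix (Fin 3) (Fin 3) ℝ) = (y : Matrix (Fin 3) (Fin 3) ℝ) * (x : Matrix (Fin 3) (Fin 3) ℝ) := by
    rw [diag_eq hx, diag_eq hy, Matrix.diagonal_mul_diagonal, Matrix.diagonal_mul_diagonal]
    ext i j
    rcases eq_or_ne i j with rfl | hij
    · simp [mul_comm]
    · simp [Matrix.diagonal_apply_ne _ hij]
  exact Subtype.ext (by simpa using hmat)

lemma posDiag_upperTri {M : Matrix (Fin 3) (Fin 3) ℝ} (h : IsPosDiag M) : IsUpperTri M :=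
  fun i j hji => h.1 i j (ne_of_gt hji)

/-- If `γ = u₂ d z w u₁` is a Bruhat factorization, then `u₂ A u₂⁻¹` is a common split
component of the minimal parabolic subgroups `P₀` and `γ P₀ γ⁻¹`. -/
theorem bruhat_gives_common_split_component
    (γ u₁ u₂ d z w : SL3)
    (hu₁ : IsUnipUpperTri (u₁ : Matrix (Fin 3) (Fin 3) ℝ))
    (hu₂ : IsUnipUpperTri (u₂ : Matrix (Fin 3) (Fin 3) ℝ))
    (hd : IsPosDiag (d : Matrix (Fin 3) (Fin 3) ℝ))
    (hz : IsSignDiag (z : Matrix (Fin 3) (Fin 3) ℝ))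
    (hw : IsSignedPerm (w : Matrix (Fin 3) (Fin 3) ℝ))
    (hγ : γ = u₂ * d * z * w * u₁) :
    ∀ a : SL3, IsPosDiag (a : Matrix (Fin 3) (Fin 3) ℝ) →
      IsUpperTri ((u₂ * a * u₂⁻¹ : SL3) : Matrix (Fin 3) (Fin 3) ℝ) ∧
      IsUpperTri ((γ⁻¹ * (u₂ * a * u₂⁻¹) * γ : SL3) : Matrix (Fin 3) (Fin 3) ℝ) := by
  intro a ha
  have hu₂i := inv_unip u₂ hu₂
  have hu₁i := inv_unip u₁ hu₁
  constructor
  · show IsUpperTri ((u₂ : Matrix (Fin 3) (Fin 3) ℝ) * (a : Matrix (Fin 3) (Fin 3) ℝ) * ((u₂⁻¹ : SL3) : Matrix (Fin 3) (Fin 3) ℝ))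
    exact mul_upperTri (mul_upperTri hu₂.1 (posDiag_upperTri ha)) hu₂i.1
  · -- build the permuting map τ
    have hcol := hw.2.1
    set W : Matrix (Fin 3) (Fin 3) ℝ := ↑w with hW
    let τ : Fin 3 → Fin 3 := fun j => (hcol j).choose
    have hτ1 : ∀ j, W (τ j) j ≠ 0 := fun j => (hcol j).choose_spec.1
    have hτ2 : ∀ j i, W i j ≠ 0 → i = τ j := fun j i h => (hcol j).choose_spec.2 i h
    have hτinj : Function.Injective τ := by
      intro j j' hjj'
      obtain ⟨j₀, _, huniq⟩ := hw.1 (τ j)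
      have e1 : j = j₀ := huniq j (hτ1 j)
      have e2 : j' = j₀ := huniq j' (by rw [hjj']; exact hτ1 j')
      rw [e1, e2]
    have hτbij : Function.Bijective τ := Finite.injective_iff_bijective.mp hτinj
    -- diagonal entries of a
    set A : Matrix (Fin 3) (Fin 3) ℝ := ↑a with hA
    have hdetA : A.det = 1 := a.2
    have hAdiag : A = Matrix.diagonal (fun i => A i i) := diag_eq ha.1
    have hprodA : ∏ i, A i i = 1 := by
      rw [← Matrix.det_diagonal, ← hAdiag, hdetA]
    -- construct c
    have hdetC : (Matrix.diagonal (fun j => A (τ j) (τ j))).det = 1 := by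
      rw [Matrix.det_diagonal]
      rw [Function.Bijective.prod_comp hτbij (fun i => A i i)]
      exact hprodA
    set c : SL3 := ⟨Matrix.diagonal (fun j => A (τ j) (τ j)), hdetC⟩ with hc
    have hcPos : IsPosDiag (c : Matrix (Fin 3) (Fin 3) ℝ) := by
      constructor
      · intro i j hij
        exact Matrix.diagonal_apply_ne _ hij
      · intro i
        show 0 < Matrix.diagonal (fun j => A (τ j) (τ j)) i i
        rw [Matrix.diagonal_apply_eq]
        exact ha.2 (τ i)
    -- w * c = a * w
    have hwc : w * c = a * w := by
      apply Subtype.ext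
      show W * Matrix.diagonal (fun j => A (τ j) (τ j)) = A * W
      ext i j
      rw [Matrix.mul_diagonal]
      conv_rhs => rw [hAdiag]
      rw [Matrix.diagonal_mul]
      by_cases h0 : W i j = 0
      · rw [h0, zero_mul, mul_zero]
      · rw [← hτ2 j i h0]; ring
    -- a commutes with d and z
    have had : a * d = d * a := diag_comm a d ha.1 hd.1
    have haz : a * z = z * a := diag_comm a z ha.1 hz.1
    -- the key group identity
    have key : γ⁻¹ * (u₂ * a * u₂⁻¹) * γ = u₁⁻¹ * c * u₁ := by
      have h1 : a * (d * z * w) = (d * z * w) * c := by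
        calc a * (d * z * w) = ((a * d) * z) * w := by group
          _ = ((d * a) * z) * w := by rw [had]
          _ = (d * (a * z)) * w := by group
          _ = (d * (z * a)) * w := by rw [haz]
          _ = (d * z) * (a * w) := by group
          _ = (d * z) * (w * c) := by rw [hwc]
          _ = (d * z * w) * c := by group
      have h2 : (d * z * w)⁻¹ * a * (d * z * w) = c := by
        rw [mul_assoc, h1, ← mul_assoc, inv_mul_cancel, one_mul]
      rw [hγ, ← h2]
      group
    rw [key]
    show IsUpperTri (((u₁⁻¹ : SL3) : Matrix (Fin 3) (Fin 3) ℝ) * (c : Matrix (Fin 3) (Fin 3) ℝ) * (u₁ : Matrix (Fin 3) (Fin 3) ℝ))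
    exact mul_upperTri (mul_upperTri hu₁i.1 (posDiag_upperTri hcPos)) hu₁.1
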